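/- Let P and Q be sets of prime numbers, and let A be a finite-index subgroup of the direct sum ⨁_{p ∈ P} ℤ/pℤ and B a finite-index subgroup of ⨁_{q ∈ Q} ℤ/qℤ. If A and B are isomorphic as groups, then the symmetric difference P Δ Q is finite. In particular, if the symmetric difference of P and Q is infinite, then ⨁_{p ∈ P} ℤ/pℤ and ⨁_{q ∈ Q} ℤ/qℤ have no isomorphic finite-index subgroups (they are not virtually isomorphic). -/

import Mathlib

open DirectSum
open scoped symmDiff

lemma aux14 (P Q : Set ℕ) (hP : ∀ p ∈ P, p.Prime) (hQ : ∀ q ∈ Q, q.Prime)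
    (A : AddSubgroup (⨁ p : P, ZMod (p : ℕ))) (B : AddSubgroup (⨁ q : Q, ZMod (q : ℕ)))
    (hA : A.FiniteIndex) (φ : A ≃+ B) : P \ Q ⊆ {r | r ∣ A.index} := by
  rintro p ⟨hpP, hpQ⟩
  have hp := hP p hpP
  by_contra hdvd
  haveI : Fact (Nat.Prime p) := ⟨hp⟩
  set n := A.index with hn
  set e : ⨁ p : P, ZMod (p : ℕ) := DirectSum.of (fun p : P => ZMod (p : ℕ)) ⟨p, hpP⟩ 1 with he
  have hxA : n • e ∈ A := AddSubgroup.nsmul_index_mem A e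
  have hsm : ∀ m : ℕ, m • e = DirectSum.of (fun p : P => ZMod (p : ℕ)) ⟨p, hpP⟩ (m : ZMod p) := by
    intro m
    rw [he, ← map_nsmul]
    congr 1
    simp [nsmul_eq_mul]
  have hxval : (n • e) ⟨p, hpP⟩ = (n : ZMod p) := by
    rw [hsm n, DirectSum.of_eq_same]
  have hxne : n • e ≠ 0 := by
    intro h
    apply hdvd
    have := congrArg (fun f => f (⟨p, hpP⟩ : P)) h
    simp only [hxval, DirectSum.zero_apply] at this
    exact (ZMod.natCast_eq_zero_iff n p).mp this
  have hpx : p • (n • e) = 0 := by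
    rw [smul_comm, hsm p]
    rw [show ((p : ZMod p) = 0) from ZMod.natCast_self p, map_zero, smul_zero]
  set b : B := φ ⟨n • e, hxA⟩ with hb
  have hbne : (b : ⨁ q : Q, ZMod (q : ℕ)) ≠ 0 := by
    intro h
    apply hxne
    have hb0 : b = 0 := Subtype.ext h
    have : (⟨n • e, hxA⟩ : A) = 0 := φ.injective (by rw [φ.map_zero]; exact hb0)
    exact congrArg Subtype.val this
  have hpb : p • (b : ⨁ q : Q, ZMod (q : ℕ)) = 0 := by
    have h1 : p • (⟨n • e, hxA⟩ : A) = 0 := Subtype.ext hpx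
    have h2 : p • b = 0 := by
      rw [hb, show p • φ ⟨n • e, hxA⟩ = φ (p • ⟨n • e, hxA⟩) from
        (φ.toAddMonoidHom.map_nsmul p _).symm, h1, φ.map_zero]
    calc p • (b : ⨁ q : Q, ZMod (q : ℕ)) = ((p • b : B) : ⨁ q : Q, ZMod (q : ℕ)) := rfl
    _ = 0 := by rw [h2]; rfl
  obtain ⟨q, hq⟩ : ∃ q, (b : ⨁ q : Q, ZMod (q : ℕ)) q ≠ 0 := by
    by_contra h
    push_neg at h
    exact hbne (DFinsupp.ext h)
  have hqp := hQ q q.2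
  haveI : Fact (Nat.Prime (q : ℕ)) := ⟨hqp⟩
  have hcomp : p • ((b : ⨁ q : Q, ZMod (q : ℕ)) q) = 0 := by
    have h1 := congrArg (fun f : ⨁ q : Q, ZMod (q : ℕ) => f q) hpb
    exact (DFinsupp.nsmul_apply p _ q).symm.trans h1
  rw [nsmul_eq_mul] at hcomp
  rcases mul_eq_zero.mp hcomp with h | h
  · have hd : (q : ℕ) ∣ p := (ZMod.natCast_eq_zero_iff p q).mp h
    have : (q : ℕ) = p := (Nat.prime_dvd_prime_iff_eq hqp hp).mp hd
    exact hpQ (this ▸ q.2)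
  · exact hq h


/-- If `P, Q` are sets of primes and some finite-index subgroup of `⨁_{p ∈ P} ℤ/pℤ` is
isomorphic to some finite-index subgroup of `⨁_{q ∈ Q} ℤ/qℤ`, then the symmetric difference
`P ∆ Q` is finite. -/
theorem stmt14 (P Q : Set ℕ) (hP : ∀ p ∈ P, p.Prime) (hQ : ∀ q ∈ Q, q.Prime)
    (A : AddSubgroup (⨁ p : P, ZMod (p : ℕ))) (B : AddSubgroup (⨁ q : Q, ZMod (q : ℕ)))
    (hA : A.FiniteIndex) (hB : B.FiniteIndex)
    (hiso : Nonempty (A ≃+ B)) :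
    (P ∆ Q).Finite := by
  obtain ⟨φ⟩ := hiso
  have h1 := aux14 P Q hP hQ A B hA φ
  have h2 := aux14 Q P hQ hP B A hB φ.symm
  have fin : ∀ n : ℕ, n ≠ 0 → ({r : ℕ | r ∣ n}).Finite := fun n hn =>
    (Set.finite_Iic n).subset (fun r hr => Nat.le_of_dvd (Nat.pos_of_ne_zero hn) hr)
  rw [Set.symmDiff_def]
  exact ((fin _ hA.index_ne_zero).subset h1).union ((fin _ hB.index_ne_zero).subset h2)
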